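/- Let M be a finitely generated reflexive R-module of constant rank r > 0 (i.e., dim_K(K ⊗_R M) = r). If tr(M) = co(R), then M is isomorphic as an R-module to the direct sum R̄^{⊕r} of r copies of the integral closure R̄. -/

import Mathlib

set_option synthInstance.maxHeartbeats 400000
set_option maxHeartbeats 1000000

open IsLocalRing TensorProduct

namespace Stmt0Proof

variable {R : Type*} [CommRing R] [IsDomain R]
variable {M : Type*} [AddCommGroup M] [Module R M]

local notation "K" => FractionRing R
local notation "S" => integralClosure R (FractionRing R)

open TensorProduct

/-- The conductor-type condition needed to let `S` act on the dual of `M`. -/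
def DualCond (R : Type*) [CommRing R] [IsDomain R] (M : Type*) [AddCommGroup M]
    [Module R M] : Prop :=
  ∀ (f : M →ₗ[R] R) (m : M) (s : integralClosure R (FractionRing R)),
    algebraMap R (FractionRing R) (f m) * (s : FractionRing R) ∈
      (algebraMap R (FractionRing R)).range

variable (hc : DualCond R M)

noncomputable def dsmulFun (s : S) (f : M →ₗ[R] R) (m : M) : R :=
  (hc f m s).choose

lemma dsmulFun_spec (s : S) (f : M →ₗ[R] R) (m : M) :
    algebraMap R K (dsmulFun hc s f m) = algebraMap R K (f m) * (s : K) :=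
  (hc f m s).choose_spec

noncomputable def dsmul (s : S) (f : M →ₗ[R] R) : M →ₗ[R] R where
  toFun m := dsmulFun hc s f m
  map_add' x y := by
    apply IsFractionRing.injective R K
    simp only [map_add, dsmulFun_spec, add_mul]
  map_smul' r x := by
    apply IsFractionRing.injective R K
    simp only [map_smul, RingHom.id_apply, dsmulFun_spec, smul_eq_mul, map_mul, mul_assoc]

@[simp] lemma dsmul_spec (s : S) (f : M →ₗ[R] R) (m : M) :
    algebraMap R K (dsmul hc s f m) = algebraMap R K (f m) * (s : K) :=
  dsmulFun_spec hc s f m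

noncomputable def dualModule : Module S (M →ₗ[R] R) where
  smul := dsmul hc
  one_smul f := by
    ext m; apply IsFractionRing.injective R K
    show algebraMap R K (dsmul hc 1 f m) = _
    simp
  mul_smul s t f := by
    ext m; apply IsFractionRing.injective R K
    show algebraMap R K (dsmul hc (s * t) f m) = algebraMap R K (dsmul hc s (dsmul hc t f) m)
    simp [mul_comm, mul_assoc, mul_left_comm]
  smul_zero s := by
    ext m; apply IsFractionRing.injective R K
    show algebraMap R K (dsmul hc s 0 m) = _
    simp
  smul_add s f g := by
    ext m; apply IsFractionRing.injective R K
    show algebraMap R K (dsmul hc s (f + g) m)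
      = algebraMap R K ((dsmul hc s f + dsmul hc s g) m)
    simp [add_mul]
  add_smul s t f := by
    ext m; apply IsFractionRing.injective R K
    show algebraMap R K (dsmul hc (s + t) f m)
      = algebraMap R K ((dsmul hc s f + dsmul hc t f) m)
    simp [mul_add]
  zero_smul f := by
    ext m; apply IsFractionRing.injective R K
    show algebraMap R K (dsmul hc 0 f m) = _
    simp

lemma dual_isScalarTower :
    letI := dualModule hc
    IsScalarTower R S (M →ₗ[R] R) := by
  letI := dualModule hc
  refine ⟨fun r s f => ?_⟩
  ext m; apply IsFractionRing.injective R K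
  show algebraMap R K (dsmul hc (r • s) f m) = algebraMap R K ((r • dsmul hc s f) m)
  simp [Algebra.smul_def, mul_assoc, mul_left_comm, mul_comm]

lemma dual_smul_comm :
    letI := dualModule hc
    SMulCommClass S R (M →ₗ[R] R) := by
  letI := dualModule hc
  refine ⟨fun s r f => ?_⟩
  ext m; apply IsFractionRing.injective R K
  show algebraMap R K (dsmul hc s (r • f) m) = algebraMap R K ((r • dsmul hc s f) m)
  simp [mul_assoc, mul_left_comm, mul_comm]


noncomputable def bidualSMul (s : S) (ξ : (M →ₗ[R] R) →ₗ[R] R) : (M →ₗ[R] R) →ₗ[R] R where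
  toFun f := ξ (dsmul hc s f)
  map_add' f g := by
    have h : dsmul hc s (f + g) = dsmul hc s f + dsmul hc s g := by
      ext m; apply IsFractionRing.injective R K
      simp [add_mul]
    show ξ (dsmul hc s (f + g)) = _
    rw [h, map_add]
  map_smul' r f := by
    have h : dsmul hc s (r • f) = r • dsmul hc s f := by
      ext m; apply IsFractionRing.injective R K
      simp [mul_assoc, mul_left_comm, mul_comm]
    show ξ (dsmul hc s (r • f)) = _
    rw [h, map_smul, RingHom.id_apply]

@[simp] lemma bidualSMul_apply (s : S) (ξ : (M →ₗ[R] R) →ₗ[R] R) (f : M →ₗ[R] R) :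
    bidualSMul hc s ξ f = ξ (dsmul hc s f) := rfl

lemma dsmul_injective_eq (s t : S) (f g : M →ₗ[R] R)
    (h : ∀ m, algebraMap R K (f m) * (s : K) = algebraMap R K (g m) * (t : K)) :
    dsmul hc s f = dsmul hc t g := by
  ext m; apply IsFractionRing.injective R K
  simp [h m]

noncomputable def bidualModule : Module S ((M →ₗ[R] R) →ₗ[R] R) where
  smul := bidualSMul hc
  one_smul ξ := by
    ext f
    show ξ (dsmul hc 1 f) = ξ f
    congr 1
    ext m; apply IsFractionRing.injective R K; simp
  mul_smul s t ξ := by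
    ext f
    show ξ (dsmul hc (s * t) f) = ξ (dsmul hc t (dsmul hc s f))
    congr 1
    ext m; apply IsFractionRing.injective R K
    simp [mul_comm, mul_assoc, mul_left_comm]
  smul_zero s := rfl
  smul_add s ξ η := rfl
  add_smul s t ξ := by
    ext f
    show ξ (dsmul hc (s + t) f) = ξ (dsmul hc s f) + ξ (dsmul hc t f)
    rw [← map_add]
    congr 1
    ext m; apply IsFractionRing.injective R K
    simp [mul_add]
  zero_smul ξ := by
    ext f
    show ξ (dsmul hc 0 f) = 0
    have : dsmul hc 0 f = 0 := by
      ext m; apply IsFractionRing.injective R K; simp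
    rw [this, map_zero]

lemma bidual_isScalarTower :
    letI := bidualModule hc
    IsScalarTower R S ((M →ₗ[R] R) →ₗ[R] R) := by
  letI := bidualModule hc
  refine ⟨fun r s ξ => ?_⟩
  show bidualSMul hc (r • s) ξ = r • bidualSMul hc s ξ
  ext f
  show ξ (dsmul hc (r • s) f) = r • ξ (dsmul hc s f)
  rw [← map_smul]
  congr 1
  ext m; apply IsFractionRing.injective R K
  simp [Algebra.smul_def, mul_assoc, mul_left_comm, mul_comm]



section Reflexive
variable [Module.IsReflexive R M]

noncomputable def mSMul (s : S) (m : M) : M :=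
  (Module.evalEquiv R M).symm (bidualSMul hc s (Module.evalEquiv R M m))

lemma evalEquiv_mSMul (s : S) (m : M) :
    Module.evalEquiv R M (mSMul hc s m) = bidualSMul hc s (Module.evalEquiv R M m) :=
  (Module.evalEquiv R M).apply_symm_apply _

noncomputable def mModule : Module S M :=
  letI := bidualModule hc
  letI : SMul S M := ⟨mSMul hc⟩
  Function.Injective.module S
    ((Module.evalEquiv R M).toLinearMap.toAddMonoidHom)
    (Module.evalEquiv R M).injective
    (fun s m => evalEquiv_mSMul hc s m)

lemma m_isScalarTower :
    letI := mModule hc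
    IsScalarTower R S M := by
  letI := mModule hc
  refine ⟨fun r s m => ?_⟩
  apply (Module.evalEquiv R M).injective
  show Module.evalEquiv R M (mSMul hc (r • s) m) = Module.evalEquiv R M (r • mSMul hc s m)
  rw [evalEquiv_mSMul, map_smul, evalEquiv_mSMul]
  ext f
  show (Module.evalEquiv R M m) (dsmul hc (r • s) f)
    = r • (Module.evalEquiv R M m) (dsmul hc s f)
  rw [← map_smul]
  congr 1
  ext x; apply IsFractionRing.injective R K
  simp [Algebra.smul_def, mul_assoc, mul_left_comm, mul_comm]

lemma m_noZeroSMulDivisors_R : NoZeroSMulDivisors R M := by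
  refine ⟨fun {r m} h => ?_⟩
  by_cases hr : r = 0
  · exact Or.inl hr
  · right
    apply (Module.evalEquiv R M).injective
    rw [map_zero]
    have h2 : r • Module.evalEquiv R M m = 0 := by rw [← map_smul, h, map_zero]
    ext f
    have := congrFun (congrArg DFunLike.coe h2) f
    simp only [LinearMap.smul_apply, LinearMap.zero_apply, smul_eq_mul] at this ⊢
    rcases mul_eq_zero.mp this with h' | h'
    · exact absurd h' hr
    · exact h'

end Reflexive


section RingFacts
variable (R)

lemma algebraMap_S_injective : Function.Injective (algebraMap R S) := by
  intro a b h
  apply IsFractionRing.injective R K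
  rw [IsScalarTower.algebraMap_apply R S K, IsScalarTower.algebraMap_apply R S K, h]

lemma algebraMap_S_coe (a : R) : ((algebraMap R S a : S) : K) = algebraMap R K a := by
  rw [IsScalarTower.algebraMap_apply R S K]; rfl

variable [IsNoetherianRing R]

lemma finite_integralClosure (γ : R) (hγ0 : γ ≠ 0)
    (hγ : ∀ s : S, algebraMap R K γ * (s : K) ∈ (algebraMap R K).range) :
    Module.Finite R S := by
  have hγK : algebraMap R K γ ≠ 0 := fun h =>
    hγ0 (IsFractionRing.injective R K (by simpa using h))
  set x : K := (algebraMap R K γ)⁻¹ with hx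
  have hle : Subalgebra.toSubmodule S ≤ Submodule.span R {x} := by
    intro z hz
    obtain ⟨t, ht⟩ := hγ ⟨z, hz⟩
    refine Submodule.mem_span_singleton.mpr ⟨t, ?_⟩
    rw [Algebra.smul_def, ht, hx]
    field_simp
  have hsp : IsNoetherian R ↥(Submodule.span R {x}) :=
    isNoetherian_of_fg_of_noetherian _ (Submodule.fg_span_singleton x)
  have h1 : ((Subalgebra.toSubmodule S).comap (Submodule.span R {x}).subtype).FG :=
    IsNoetherian.noetherian _
  have h2 := h1.map (Submodule.span R {x}).subtype
  rw [Submodule.map_comap_subtype, inf_eq_right.mpr hle] at h2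
  exact Module.Finite.iff_fg.mpr h2

lemma dimensionLEOne_of_krullDim_eq_one [IsLocalRing R] (hdim : ringKrullDim R = 1) :
    Ring.DimensionLEOne R := by
  refine ⟨fun {p} hp0 hp => ?_⟩
  by_contra hmax
  have hle : p ≤ IsLocalRing.maximalIdeal R := IsLocalRing.le_maximalIdeal hp.ne_top
  have hne : p ≠ IsLocalRing.maximalIdeal R := fun h => hmax (h ▸ IsLocalRing.maximalIdeal.isMaximal R)
  let x0 : PrimeSpectrum R := ⟨⊥, Ideal.bot_prime⟩
  let x1 : PrimeSpectrum R := ⟨p, hp⟩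
  let x2 : PrimeSpectrum R := ⟨IsLocalRing.maximalIdeal R, (IsLocalRing.maximalIdeal.isMaximal R).isPrime⟩
  have h01 : x0 < x1 := by
    rw [← PrimeSpectrum.asIdeal_lt_asIdeal]
    exact Ne.bot_lt hp0
  have h12 : x1 < x2 := by
    rw [← PrimeSpectrum.asIdeal_lt_asIdeal]
    exact lt_of_le_of_ne hle hne
  let c : LTSeries (PrimeSpectrum R) :=
    ((RelSeries.singleton _ x0).snoc x1 (by simpa using h01)).snoc x2 (by
      simpa using h12)
  have hlen : c.length = 2 := by
    simp [c, RelSeries.snoc_length]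
  have h2 := Order.LTSeries.length_le_krullDim c
  rw [hlen] at h2
  rw [show Order.krullDim (PrimeSpectrum R) = ringKrullDim R from rfl, hdim] at h2
  norm_num at h2

end RingFacts



lemma isArtinianRing_quot_of_liesOver {R' B : Type*} [CommRing R'] [CommRing B] [Algebra R' B]
    [Module.Finite R' B] (I : Ideal R') [I.IsMaximal] (J : Ideal B) [J.LiesOver I] :
    IsArtinianRing (B ⧸ J) := by
  letI : Algebra (R' ⧸ I) (B ⧸ J) := Ideal.Quotient.algebraOfLiesOver J I
  letI : IsScalarTower R' (R' ⧸ I) (B ⧸ J) := Ideal.Quotient.isScalarTower_of_liesOver R' J I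
  haveI : Module.Finite (R' ⧸ I) (B ⧸ J) :=
    Module.Finite.of_restrictScalars_finite R' (R' ⧸ I) (B ⧸ J)
  haveI : IsArtinianRing (R' ⧸ I) := by
    letI : Field (R' ⧸ I) := Ideal.Quotient.field I
    exact DivisionRing.instIsArtinianRing
  exact IsArtinianRing.of_finite (R' ⧸ I) (B ⧸ J)

section Primes
variable (R) [IsNoetherianRing R] [IsLocalRing R]

lemma finitePrimes (hfin : Module.Finite R S) (hdim1 : Ring.DimensionLEOne R) :
    {I : Ideal S | I.IsPrime}.Finite := by
  haveI := hfin
  haveI : Algebra.IsIntegral R S := Algebra.IsIntegral.of_finite R S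
  have hker : RingHom.ker (algebraMap R S) = ⊥ :=
    (RingHom.injective_iff_ker_eq_bot _).mp (algebraMap_S_injective R)
  obtain ⟨Q, hQmax, hQcomap⟩ := Ideal.exists_ideal_over_maximal_of_isIntegral
    (IsLocalRing.maximalIdeal R) (by rw [hker]; exact bot_le)
  set J : Ideal S := (IsLocalRing.maximalIdeal R).map (algebraMap R S) with hJ
  have hJQ : J ≤ Q := Ideal.map_le_iff_le_comap.mpr hQcomap.ge
  have hJcomap : J.comap (algebraMap R S) = IsLocalRing.maximalIdeal R := by
    refine le_antisymm ?_ Ideal.le_comap_map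
    calc J.comap (algebraMap R S) ≤ Q.comap (algebraMap R S) := Ideal.comap_mono hJQ
    _ = IsLocalRing.maximalIdeal R := hQcomap
  haveI : J.LiesOver (IsLocalRing.maximalIdeal R) := ⟨hJcomap.symm⟩
  haveI hmm : (IsLocalRing.maximalIdeal R).IsMaximal := IsLocalRing.maximalIdeal.isMaximal R
  haveI : IsArtinianRing (S ⧸ J) :=
    isArtinianRing_quot_of_liesOver (IsLocalRing.maximalIdeal R) J
  have hfinQ := IsArtinianRing.setOfPred_isPrime_finite (S ⧸ J)
  have hsub : {I : Ideal S | I.IsPrime} ⊆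
      insert ⊥ ((Ideal.comap (Ideal.Quotient.mk J)) '' {I : Ideal (S ⧸ J) | I.IsPrime}) := by
    intro P hP
    haveI : P.IsPrime := hP
    by_cases hP0 : P = ⊥
    · exact hP0 ▸ Set.mem_insert _ _
    · have hcomapP : P.comap (algebraMap R S) = IsLocalRing.maximalIdeal R := by
        obtain ⟨x, hxP, hx0⟩ := Submodule.exists_mem_ne_zero_of_ne_bot hP0
        have hne : P.comap (algebraMap R S) ≠ ⊥ :=
          Ideal.comap_ne_bot_of_integral_mem hx0 hxP (Algebra.IsIntegral.isIntegral x)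
        exact IsLocalRing.eq_maximalIdeal (hdim1.maximalOfPrime hne inferInstance)
      have hJP : J ≤ P := Ideal.map_le_iff_le_comap.mpr hcomapP.ge
      refine Set.mem_insert_of_mem _ ⟨P.map (Ideal.Quotient.mk J), ?_, ?_⟩
      · exact Ideal.map_isPrime_of_surjective Ideal.Quotient.mk_surjective
          (by rw [Ideal.mk_ker]; exact hJP)
      · rw [Ideal.comap_map_of_surjective _ Ideal.Quotient.mk_surjective,
          ← RingHom.ker_eq_comap_bot, Ideal.mk_ker, sup_eq_left.mpr hJP]
  exact ((hfinQ.image _).insert ⊥).subset hsub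

lemma pidS (hfin : Module.Finite R S) (hdim1 : Ring.DimensionLEOne R) :
    IsPrincipalIdealRing S := by
  haveI := hfin
  haveI : IsNoetherianRing S := isNoetherianRing_iff.mpr (isNoetherian_of_tower R inferInstance)
  haveI : Ring.DimensionLEOne S := Ring.DimensionLEOne.integralClosure R K
  haveI : IsIntegrallyClosed S :=
    integralClosure.isIntegrallyClosedOfFiniteExtension (FractionRing R) (L := FractionRing R)
  haveI : IsDedekindDomain S := { }
  exact IsPrincipalIdealRing.of_finite_primes (finitePrimes R hfin hdim1)

end Primes


section Rank
variable (R)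

noncomputable def inclS : S →ₗ[R] K := (integralClosure R (FractionRing R)).val.toLinearMap

@[simp] lemma inclS_apply (s : S) : inclS R s = (s : K) := rfl

lemma isLocalizedModule_inclS : IsLocalizedModule (nonZeroDivisors R) (inclS R) := by
  constructor
  · intro x
    rw [Module.End.isUnit_iff]
    have hx : algebraMap R K (x : R) ≠ 0 := fun hh =>
      nonZeroDivisors.ne_zero x.2 (IsFractionRing.injective R K (by simpa using hh))
    constructor
    · intro a b hab
      simp only [Module.algebraMap_end_apply] at hab
      rwa [Algebra.smul_def, Algebra.smul_def, mul_right_inj' hx] at hab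
    · intro k
      refine ⟨(algebraMap R K (x : R))⁻¹ * k, ?_⟩
      simp only [Module.algebraMap_end_apply]
      rw [Algebra.smul_def, ← mul_assoc, mul_inv_cancel₀ hx, one_mul]
  · intro y
    obtain ⟨⟨a, b⟩, h⟩ := IsLocalization.surj (M := nonZeroDivisors R) y
    refine ⟨⟨algebraMap R S a, b⟩, ?_⟩
    show b • y = inclS R (algebraMap R S a)
    rw [inclS_apply, algebraMap_S_coe, Submonoid.smul_def, Algebra.smul_def, mul_comm]
    exact h
  · intro x y h
    refine ⟨1, ?_⟩
    have : x = y := Subtype.ext (by simpa using h)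
    rw [this]

noncomputable def tensorEquivS : K ⊗[R] S ≃ₗ[K] K := by
  haveI := isLocalizedModule_inclS R
  exact (IsLocalizedModule.isBaseChange (nonZeroDivisors R) K (inclS R)).equiv

end Rank

section NZD
variable [Module.IsReflexive R M]

lemma m_noZeroSMulDivisors_S (γ : R) (hγ0 : γ ≠ 0)
    (hγ : ∀ s : S, algebraMap R K γ * (s : K) ∈ (algebraMap R K).range) :
    letI := mModule hc
    NoZeroSMulDivisors S M := by
  letI := mModule hc
  haveI := m_isScalarTower hc
  haveI : NoZeroSMulDivisors R M := m_noZeroSMulDivisors_R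
  refine ⟨fun {s m} h => ?_⟩
  by_cases hs : s = 0
  · exact Or.inl hs
  right
  obtain ⟨t, ht⟩ := hγ s
  have hts : algebraMap R S t = algebraMap R S γ * s := by
    apply Subtype.ext
    rw [algebraMap_S_coe]
    push_cast
    exact ht
  have htm : t • m = 0 := by
    rw [← algebraMap_smul S t m, hts, mul_smul, h, smul_zero]
  have ht0 : t ≠ 0 := by
    intro h0
    rw [h0, map_zero] at ht
    have h1 : algebraMap R K γ ≠ 0 := fun hh =>
      hγ0 (IsFractionRing.injective R K (by simpa using hh))
    have h2 : (s : K) ≠ 0 := fun hh => hs (Subtype.ext (by simpa using hh))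
    exact mul_ne_zero h1 h2 ht.symm
  rcases smul_eq_zero.mp htm with h' | h'
  · exact absurd h' ht0
  · exact h'

end NZD

end Stmt0Proof


/-- The trace ideal of a module: the ideal generated by all values `f m`
for `f : M →ₗ[R] R` and `m : M`. -/
def traceIdeal (R : Type*) [CommRing R] (M : Type*) [AddCommGroup M] [Module R M] :
    Ideal R :=
  ⨆ f : M →ₗ[R] R, LinearMap.range f

/-- The conductor of a Noetherian domain `R`:
`co(R) = {r ∈ R : r · R̄ ⊆ R}`, where `R̄` is the integral closure of `R` in its
fraction field. -/
noncomputable def conductorIdeal (R : Type*) [CommRing R] [IsDomain R] : Ideal R where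
  carrier := {r : R | ∀ x ∈ integralClosure R (FractionRing R),
    algebraMap R (FractionRing R) r * x ∈ (algebraMap R (FractionRing R)).range}
  add_mem' := by
    intro a b ha hb x hx
    rw [map_add, add_mul]
    exact add_mem (ha x hx) (hb x hx)
  zero_mem' := by
    intro x hx
    rw [map_zero, zero_mul]
    exact zero_mem _
  smul_mem' := by
    intro c a ha x hx
    rw [smul_eq_mul, map_mul, mul_assoc]
    exact mul_mem ⟨c, rfl⟩ (ha x hx)

/-- Let `R` be a one dimensional analytically unramified Noetherian
local domain. If `M` is a finitely generated reflexive `R`-module of constant rank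
`r > 0` whose trace ideal equals the conductor of `R`, then `M ≅ R̄^{⊕ r}`. -/
theorem stmt0 (R : Type*) [CommRing R] [IsDomain R] [IsNoetherianRing R] [IsLocalRing R]
    (hdim : ringKrullDim R = 1)
    (hur : IsReduced (AdicCompletion (maximalIdeal R) R))
    (M : Type*) [AddCommGroup M] [Module R M] [Module.Finite R M]
    (hrefl : Module.IsReflexive R M)
    (r : ℕ) (hr : 0 < r)
    (hrank : Module.finrank (FractionRing R) (FractionRing R ⊗[R] M) = r)
    (htr : traceIdeal R M = conductorIdeal R) :
    Nonempty (M ≃ₗ[R] (Fin r → (integralClosure R (FractionRing R)))) := by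

  classical
  have hcond : ∀ a : R, a ∈ traceIdeal R M → ∀ s : integralClosure R (FractionRing R),
      algebraMap R (FractionRing R) a * (s : FractionRing R) ∈
        (algebraMap R (FractionRing R)).range := by
    intro a ha s
    rw [htr] at ha
    exact ha (s : FractionRing R) s.2
  have htrace_mem : ∀ (f : M →ₗ[R] R) (m : M), f m ∈ traceIdeal R M := fun f m =>
    (le_iSup (fun f : M →ₗ[R] R => LinearMap.range f) f) (LinearMap.mem_range_self f m)
  have hc : Stmt0Proof.DualCond R M := fun f m s => hcond (f m) (htrace_mem f m) s
  haveI : Nontrivial M := by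
    by_contra hM
    rw [not_nontrivial_iff_subsingleton] at hM
    haveI : Subsingleton (FractionRing R ⊗[R] M) := by
      constructor
      intro a b
      have hz : ∀ c : FractionRing R ⊗[R] M, c = 0 := by
        intro c
        induction c using TensorProduct.induction_on with
        | zero => rfl
        | tmul k m => rw [Subsingleton.elim m 0, TensorProduct.tmul_zero]
        | add x y hx hy => rw [hx, hy, add_zero]
      rw [hz a, hz b]
    rw [Module.finrank_zero_of_subsingleton] at hrank
    omega
  obtain ⟨m0, hm0⟩ := exists_ne (0 : M)
  have hev : Module.evalEquiv R M m0 ≠ 0 := fun h =>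
    hm0 ((Module.evalEquiv R M).map_eq_zero_iff.mp h)
  have hex : ∃ f : Module.Dual R M, (Module.evalEquiv R M) m0 f ≠ 0 := by
    by_contra h
    push_neg at h
    exact hev (LinearMap.ext fun f => h f)
  obtain ⟨f0, hf0⟩ := hex
  have hf0' : f0 m0 ≠ 0 := by
    simpa [Module.evalEquiv_apply, Module.Dual.eval_apply] using hf0
  have hγ : ∀ s : integralClosure R (FractionRing R),
      algebraMap R (FractionRing R) (f0 m0) * (s : FractionRing R) ∈
        (algebraMap R (FractionRing R)).range :=
    fun s => hcond (f0 m0) (htrace_mem f0 m0) s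
  have hdim1 : Ring.DimensionLEOne R := Stmt0Proof.dimensionLEOne_of_krullDim_eq_one R hdim
  haveI hfinS : Module.Finite R (integralClosure R (FractionRing R)) :=
    Stmt0Proof.finite_integralClosure R (f0 m0) hf0' hγ
  haveI : IsPrincipalIdealRing (integralClosure R (FractionRing R)) :=
    Stmt0Proof.pidS R hfinS hdim1
  letI : Module (integralClosure R (FractionRing R)) M := Stmt0Proof.mModule hc
  haveI : IsScalarTower R (integralClosure R (FractionRing R)) M := Stmt0Proof.m_isScalarTower hc
  haveI : Module.Finite (integralClosure R (FractionRing R)) M :=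
    Module.Finite.of_restrictScalars_finite R _ _
  haveI : NoZeroSMulDivisors (integralClosure R (FractionRing R)) M :=
    Stmt0Proof.m_noZeroSMulDivisors_S hc (f0 m0) hf0' hγ
  haveI : Module.Free (integralClosure R (FractionRing R)) M :=
    Module.free_of_finite_type_torsion_free'
  let ι := Module.Free.ChooseBasisIndex (integralClosure R (FractionRing R)) M
  let b := Module.Free.chooseBasis (integralClosure R (FractionRing R)) M
  let n := Fintype.card ι
  let e1 : M ≃ₗ[integralClosure R (FractionRing R)]
      (Fin n → integralClosure R (FractionRing R)) :=
    (b.reindex (Fintype.equivFin ι)).equivFun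
  let e2 : M ≃ₗ[R] (Fin n → integralClosure R (FractionRing R)) := e1.restrictScalars R
  have hn : n = r := by
    have h1 := LinearEquiv.finrank_eq
      (((LinearEquiv.baseChange R (FractionRing R) M
          (Fin n → integralClosure R (FractionRing R)) e2).trans
        (TensorProduct.piRight R (FractionRing R) (FractionRing R)
          (fun _ : Fin n => integralClosure R (FractionRing R)))).trans
        (LinearEquiv.piCongrRight (fun _ : Fin n => Stmt0Proof.tensorEquivS R)))
    rw [hrank, Module.finrank_pi] at h1
    simpa using h1.symm
  exact ⟨hn ▸ e2⟩
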